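/- With A_m and B_m the automata from the exponential lower-bound construction (A_m the (m+1)-state NFA over Σ_m = {b, a_1, …, a_m}; B_m accepting Σ_m* b), there is no infinite alternating subsequence tower between L(A_m) and L(B_m). -/

import Mathlib

/-- An infinite alternating subsequence tower between `K` and `L`. -/
def InfSubTower {α : Type*} (K L : Set (List α)) (w : ℕ → List α) : Prop :=
  w 0 ∈ K ∪ L ∧
    ∀ i, (w i).Sublist (w (i + 1)) ∧
      (w i ∈ K → w (i + 1) ∈ L) ∧ (w i ∈ L → w (i + 1) ∈ K)

/-- The alphabet `Σ_m = {b, a_1, …, a_m}` is encoded in `ℕ`: the letter `b` is `0`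
and the letter `a_i` is `i` (for `1 ≤ i ≤ m`).  The NFA `A_m` has states
`{0,1,…,m}` (all initial, `0` accepting), `b`-self-loops on states `1,…,m`,
`a_j`-self-loops on states `i > j`, and `a_i`-transitions from `i` to all `j < i`. -/
def expNFA (m : ℕ) : NFA ℕ (Fin (m + 1)) where
  step i c :=
    {j | (c = 0 ∧ 1 ≤ (i : ℕ) ∧ j = i) ∨
      (1 ≤ c ∧ c < (i : ℕ) ∧ j = i) ∨
      (c = (i : ℕ) ∧ 1 ≤ (i : ℕ) ∧ (j : ℕ) < (i : ℕ))}
  start := Set.univ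
  accept := {i | (i : ℕ) = 0}

/-- The language `Σ_m* b` accepted by `B_m`. -/
def endsWithB (m : ℕ) : Set (List ℕ) :=
  {w | (∀ c ∈ w, c ≤ m) ∧ ∃ v, w = v ++ [0]}
namespace NoTowerAux

/-- The combinatorial characterization of acceptance by `expNFA`:
`w = u ++ j :: v` where `j ≥ 1` is the (unique) maximum, occurring once. -/
inductive IsAcc : List ℕ → Prop
  | nil : IsAcc []
  | cons (u : List ℕ) (j : ℕ) (v : List ℕ) (hj : 1 ≤ j) (hu : ∀ c ∈ u, c < j)
      (hv : ∀ c ∈ v, c < j) (h : IsAcc v) : IsAcc (u ++ j :: v)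

variable {σ α : Type*}

lemma evalFrom_cons (M : NFA α σ) (S : Set σ) (a : α) (w : List α) :
    M.evalFrom S (a :: w) = M.evalFrom (M.stepSet S a) w := rfl

lemma evalFrom_append (M : NFA α σ) (S : Set σ) (x y : List α) :
    M.evalFrom S (x ++ y) = M.evalFrom (M.evalFrom S x) y :=
  List.foldl_append ..

lemma mem_evalFrom_iff (M : NFA α σ) (S : Set σ) (w : List α) (x : σ) :
    x ∈ M.evalFrom S w ↔ ∃ s ∈ S, x ∈ M.evalFrom ({s} : Set σ) w := by
  induction w generalizing S with
  | nil => simp [NFA.evalFrom_nil]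
  | cons a w ih =>
    rw [evalFrom_cons, ih]
    constructor
    · rintro ⟨q, hq, hx⟩
      rw [NFA.mem_stepSet] at hq
      obtain ⟨s, hs, hq⟩ := hq
      refine ⟨s, hs, ?_⟩
      rw [evalFrom_cons, ih]
      refine ⟨q, ?_, hx⟩
      rw [NFA.mem_stepSet]
      exact ⟨s, rfl, hq⟩
    · rintro ⟨s, hs, hx⟩
      rw [evalFrom_cons, ih] at hx
      obtain ⟨q, hq, hx⟩ := hx
      rw [NFA.mem_stepSet] at hq
      obtain ⟨s', hs', hq⟩ := hq
      rw [Set.mem_singleton_iff] at hs'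
      refine ⟨q, ?_, hx⟩
      rw [NFA.mem_stepSet]
      exact ⟨s', by rw [hs']; exact hs, hq⟩


lemma run_decomp (m : ℕ) : ∀ (w : List ℕ) (q : Fin (m + 1)),
    (0 : Fin (m + 1)) ∈ (expNFA m).evalFrom ({q} : Set (Fin (m + 1))) w →
    (w = [] ∧ (q : ℕ) = 0) ∨
      ∃ u v, w = u ++ (q : ℕ) :: v ∧ 1 ≤ (q : ℕ) ∧ (∀ c ∈ u, c < (q : ℕ)) ∧
        (∀ c ∈ v, c < (q : ℕ)) ∧ IsAcc v := by
  intro w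
  induction w with
  | nil =>
    intro q h
    rw [NFA.evalFrom_nil, Set.mem_singleton_iff] at h
    left
    refine ⟨rfl, ?_⟩
    rw [← h]
    simp
  | cons a w ih =>
    intro q h
    rw [evalFrom_cons, mem_evalFrom_iff] at h
    obtain ⟨q', hq', h0⟩ := h
    rw [NFA.mem_stepSet] at hq'
    obtain ⟨s, hs, hstep⟩ := hq'
    rw [Set.mem_singleton_iff] at hs
    rw [hs] at hstep
    have hstep' : (a = 0 ∧ 1 ≤ (q : ℕ) ∧ q' = q) ∨ (1 ≤ a ∧ a < (q : ℕ) ∧ q' = q) ∨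
        (a = (q : ℕ) ∧ 1 ≤ (q : ℕ) ∧ (q' : ℕ) < (q : ℕ)) := hstep
    rcases hstep' with ⟨ha, hq1, rfl⟩ | ⟨ha1, ha2, rfl⟩ | ⟨ha, hq1, hlt⟩
    · rcases ih q' h0 with ⟨rfl, hq0⟩ | ⟨u, v, rfl, hq1', hu, hv, hacc⟩
      · omega
      · exact Or.inr ⟨a :: u, v, rfl, hq1', by
          intro c hc
          rcases List.mem_cons.mp hc with rfl | hc
          · omega
          · exact hu c hc, hv, hacc⟩
    · rcases ih q' h0 with ⟨rfl, hq0⟩ | ⟨u, v, rfl, hq1', hu, hv, hacc⟩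
      · omega
      · exact Or.inr ⟨a :: u, v, rfl, hq1', by
          intro c hc
          rcases List.mem_cons.mp hc with rfl | hc
          · omega
          · exact hu c hc, hv, hacc⟩
    · rcases ih q' h0 with ⟨rfl, hq0⟩ | ⟨u, v, rfl, hq1', hu, hv, hacc⟩
      · refine Or.inr ⟨[], [], by simp [ha], hq1, by simp, by simp, IsAcc.nil⟩
      · refine Or.inr ⟨[], u ++ (q' : ℕ) :: v, by simp [ha], hq1, by simp, ?_,
          IsAcc.cons u _ v hq1' hu hv hacc⟩
        intro c hc
        rcases List.mem_append.mp hc with hc | hc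
        · exact lt_trans (hu c hc) hlt
        · rcases List.mem_cons.mp hc with rfl | hc
          · exact hlt
          · exact lt_trans (hv c hc) hlt

lemma loop (m : ℕ) (q : Fin (m + 1)) (hq : 1 ≤ (q : ℕ)) :
    ∀ u : List ℕ, (∀ c ∈ u, c < (q : ℕ)) → q ∈ (expNFA m).evalFrom ({q} : Set (Fin (m+1))) u := by
  intro u
  induction u with
  | nil => intro _; rw [NFA.evalFrom_nil]; rfl
  | cons c u ih =>
    intro hu
    rw [evalFrom_cons, mem_evalFrom_iff]
    refine ⟨q, ?_, ih fun c hc => hu c (List.mem_cons_of_mem _ hc)⟩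
    rw [NFA.mem_stepSet]
    refine ⟨q, rfl, ?_⟩
    show (c = 0 ∧ 1 ≤ (q : ℕ) ∧ q = q) ∨ _ ∨ _
    have hc := hu c List.mem_cons_self
    rcases Nat.eq_zero_or_pos c with rfl | hc1
    · exact Or.inl ⟨rfl, hq, rfl⟩
    · exact Or.inr (Or.inl ⟨hc1, hc, rfl⟩)

lemma build (m : ℕ) : ∀ w : List ℕ, IsAcc w → (∀ c ∈ w, c ≤ m) →
    ∀ b : ℕ, 1 ≤ b → (∀ c ∈ w, c < b) →
    ∃ q : Fin (m + 1), (q : ℕ) < b ∧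
      (0 : Fin (m + 1)) ∈ (expNFA m).evalFrom ({q} : Set (Fin (m+1))) w := by
  intro w hw
  induction hw with
  | nil =>
    intro _ b hb _
    exact ⟨0, by simp; omega, by rw [NFA.evalFrom_nil]; rfl⟩
  | cons u j v hj hu hv h ih =>
    intro hle b hb hltb
    have hjm : j ≤ m := hle j (by simp)
    have hjb : j < b := hltb j (by simp)
    set qj : Fin (m + 1) := ⟨j, by omega⟩ with hqj
    refine ⟨qj, hjb, ?_⟩
    have hloop : qj ∈ (expNFA m).evalFrom {qj} u :=
      loop m qj hj u (fun c hc => hu c hc)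
    obtain ⟨q', hq'j, hq'0⟩ := ih
      (fun c hc => hle c (by simp [hc]))
      j hj (fun c hc => hv c hc)
    have : (u ++ j :: v) = (u ++ [j]) ++ v := by simp
    rw [this, evalFrom_append, mem_evalFrom_iff]
    refine ⟨q', ?_, hq'0⟩
    rw [NFA.evalFrom_append, NFA.evalFrom_singleton, NFA.mem_stepSet]
    refine ⟨qj, hloop, ?_⟩
    exact Or.inr (Or.inr ⟨rfl, hj, hq'j⟩)

lemma accepts_iff (m : ℕ) (w : List ℕ) :
    w ∈ (expNFA m).accepts ↔ (∀ c ∈ w, c ≤ m) ∧ IsAcc w := by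
  constructor
  · intro h
    rw [NFA.mem_accepts] at h
    obtain ⟨q0, hq0, hev⟩ := h
    have hq00 : q0 = 0 := Fin.ext (by simpa [expNFA] using hq0)
    subst hq00
    rw [mem_evalFrom_iff] at hev
    obtain ⟨s, -, hs⟩ := hev
    rcases run_decomp m w s hs with ⟨rfl, -⟩ | ⟨u, v, rfl, hq1, hu, hv, hacc⟩
    · exact ⟨by simp, IsAcc.nil⟩
    · have hsm : (s : ℕ) ≤ m := by omega
      refine ⟨?_, IsAcc.cons u _ v hq1 hu hv hacc⟩
      intro c hc
      rcases List.mem_append.mp hc with hc | hc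
      · exact le_trans (le_of_lt (hu c hc)) hsm
      · rcases List.mem_cons.mp hc with rfl | hc
        · exact hsm
        · exact le_trans (le_of_lt (hv c hc)) hsm
  · rintro ⟨hle, hacc⟩
    obtain ⟨q, -, h0⟩ := build m w hacc hle (m + 1) (by omega)
      (fun c hc => Nat.lt_succ_of_le (hle c hc))
    rw [NFA.mem_accepts]
    refine ⟨0, by simp [expNFA], ?_⟩
    rw [mem_evalFrom_iff]
    exact ⟨q, by simp [expNFA], h0⟩

lemma endsZero_iff (w : List ℕ) : (∃ v, w = v ++ [0]) ↔ w.getLast? = some 0 := by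
  constructor
  · rintro ⟨v, rfl⟩
    exact List.getLast?_concat
  · intro h
    cases w with
    | nil => simp at h
    | cons a w =>
      have hne : a :: w ≠ [] := by simp
      have hd := List.dropLast_append_getLast hne
      rw [List.getLast?_eq_getLast_of_ne_nil hne] at h
      simp only [Option.some.injEq] at h
      rw [h] at hd
      exact ⟨(a :: w).dropLast, hd.symm⟩

lemma isAcc_getLast (w : List ℕ) (h : IsAcc w) : w.getLast? ≠ some 0 := by
  induction h with
  | nil => simp
  | cons u j v hj hu hv h ih =>
    cases v with
    | nil =>
      rw [show (u ++ [j] : List ℕ) = u ++ [j] from rfl, List.getLast?_concat]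
      exact fun hc => absurd (Option.some.inj hc) (by omega)
    | cons c v =>
      have h1 : u ++ j :: c :: v = (u ++ [j]) ++ (c :: v) := by simp
      rw [h1, List.getLast?_append]
      have hne : c :: v ≠ [] := by simp
      rw [List.getLast?_eq_getLast_of_ne_nil hne] at ih ⊢
      rw [Option.some_or]
      exact ih

/-- Everything after the first occurrence of `a`. -/
def cut (a : ℕ) : List ℕ → List ℕ
  | [] => []
  | c :: w => if c = a then w else cut a w

lemma cut_decomp (a : ℕ) (w : List ℕ) (h : a ∈ w) :
    ∃ u, w = u ++ a :: cut a w ∧ a ∉ u := by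
  induction w with
  | nil => simp at h
  | cons c w ih =>
    by_cases hc : c = a
    · subst hc
      exact ⟨[], by simp [cut], by simp⟩
    · have hw : a ∈ w := by
        rcases List.mem_cons.mp h with h | h
        · exact absurd h.symm hc
        · exact h
      obtain ⟨u, hu, hau⟩ := ih hw
      refine ⟨c :: u, ?_, ?_⟩
      · rw [show cut a (c :: w) = cut a w from by simp [cut, hc]]
        rw [List.cons_append, ← hu]
      · simp [hau]
        exact fun h => hc h.symm

lemma cut_eq (a : ℕ) (v : List ℕ) : ∀ u : List ℕ, a ∉ u → cut a (u ++ a :: v) = v := by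
  intro u
  induction u with
  | nil => intro _; simp [cut]
  | cons c u ih =>
    intro h
    have hc : ¬ (c = a) := fun hc => h (by simp [hc])
    simp only [List.cons_append, cut, if_neg hc]
    exact ih (fun hm => h (List.mem_cons_of_mem _ hm))

lemma cut_sublist {a : ℕ} {u u' v v' : List ℕ} (hu' : a ∉ u')
    (h : (u ++ a :: v).Sublist (u' ++ a :: v')) : v.Sublist v' := by
  rw [List.sublist_append_iff] at h
  obtain ⟨x, y, hxy, hx, hy⟩ := h
  have hax : a ∉ x := fun hm => hu' (hx.subset hm)
  have hav : (a :: v).Sublist y := by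
    rcases List.append_eq_append_iff.mp hxy with ⟨z, hz1, hz2⟩ | ⟨z, hz1, hz2⟩
    · cases z with
      | nil =>
        rw [List.nil_append] at hz2
        rw [← hz2]
      | cons b z =>
        exfalso
        have hba : a = b := (List.cons.inj hz2).1
        exact hax (by rw [hz1, hba]; simp)
    · rw [hz2]
      exact List.sublist_append_right z _
  exact List.cons_sublist_cons.mp (hav.trans hy)

lemma disj (m : ℕ) (w : List ℕ) (hK : w ∈ (expNFA m).accepts) (hL : w ∈ endsWithB m) : False := by
  obtain ⟨-, hacc⟩ := (accepts_iff m w).mp hK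
  exact isAcc_getLast w hacc ((endsZero_iff w).mp hL.2)

lemma K_down (m : ℕ) (w : List ℕ) (h : w ∈ (expNFA (m + 1)).accepts) (hm : (m + 1) ∉ w) :
    w ∈ (expNFA m).accepts := by
  obtain ⟨hle, hacc⟩ := (accepts_iff (m + 1) w).mp h
  refine (accepts_iff m w).mpr ⟨fun c hc => ?_, hacc⟩
  have := hle c hc
  have : c ≠ m + 1 := fun hc' => hm (hc' ▸ hc)
  omega

lemma K_up (m : ℕ) (w : List ℕ) (h : w ∈ (expNFA m).accepts) :
    w ∈ (expNFA (m + 1)).accepts := by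
  obtain ⟨hle, hacc⟩ := (accepts_iff m w).mp h
  exact (accepts_iff (m + 1) w).mpr ⟨fun c hc => le_trans (hle c hc) (by omega), hacc⟩

lemma L_down (m : ℕ) (w : List ℕ) (h : w ∈ endsWithB (m + 1)) (hm : (m + 1) ∉ w) :
    w ∈ endsWithB m := by
  refine ⟨fun c hc => ?_, h.2⟩
  have := h.1 c hc
  have : c ≠ m + 1 := fun hc' => hm (hc' ▸ hc)
  omega

lemma L_up (m : ℕ) (w : List ℕ) (h : w ∈ endsWithB m) : w ∈ endsWithB (m + 1) :=
  ⟨fun c hc => le_trans (h.1 c hc) (by omega), h.2⟩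

/-- Decomposition of an accepted word containing `m+1`. -/
lemma K_cut (m : ℕ) (w : List ℕ) (h : w ∈ (expNFA (m + 1)).accepts) (hm : (m + 1) ∈ w) :
    ∃ u, w = u ++ (m + 1) :: cut (m + 1) w ∧ (m + 1) ∉ u ∧ (m + 1) ∉ cut (m + 1) w ∧
      cut (m + 1) w ∈ (expNFA m).accepts := by
  obtain ⟨hle, hacc⟩ := (accepts_iff (m + 1) w).mp h
  cases hacc with
  | nil => simp at hm
  | cons u j v hj hu hv hacc =>
    have hju : (m + 1) ∉ u := fun hc => by have h1 := hu _ hc; have h2 := hle j (by simp); omega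
    have hjv : (m + 1) ∉ v := fun hc => by have h1 := hv _ hc; have h2 := hle j (by simp); omega
    have hj' : j = m + 1 := by
      rcases List.mem_append.mp hm with hc | hc
      · exact absurd hc hju
      · rcases List.mem_cons.mp hc with rfl | hc
        · rfl
        · exact absurd hc hjv
    subst hj'
    have hcut : cut (m + 1) (u ++ (m + 1) :: v) = v := cut_eq (m + 1) v u hju
    rw [hcut]
    refine ⟨u, rfl, hju, hjv, (accepts_iff _ v).mpr ⟨fun c hc => ?_, hacc⟩⟩
    have := hv c hc
    omega

lemma L_cut (m : ℕ) (w : List ℕ) (h : w ∈ endsWithB (m + 1)) (hm : (m + 1) ∈ w)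
    (hone : (m + 1) ∉ cut (m + 1) w) : cut (m + 1) w ∈ endsWithB m := by
  obtain ⟨u, hw, hu⟩ := cut_decomp (m + 1) w hm
  set v := cut (m + 1) w with hv
  refine ⟨fun c hc => ?_, ?_⟩
  · have h1 : c ≤ m + 1 := h.1 c (by rw [hw]; simp [hc])
    have h2 : c ≠ m + 1 := fun hc' => hone (hc' ▸ hc)
    omega
  · rw [endsZero_iff]
    have hlast : w.getLast? = some 0 := (endsZero_iff w).mp h.2
    cases hv' : v with
    | nil =>
      exfalso
      rw [hw, hv', show u ++ (m+1) :: ([] : List ℕ) = u ++ [m+1] from rfl,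
        List.getLast?_concat] at hlast
      exact absurd (Option.some.inj hlast) (by omega)
    | cons c v' =>
      rw [hw, hv', show u ++ (m+1) :: c :: v' = (u ++ [m+1]) ++ (c :: v') from by simp,
        List.getLast?_append, List.getLast?_eq_getLast_of_ne_nil (by simp : c :: v' ≠ []),
        Option.some_or] at hlast
      rw [List.getLast?_eq_getLast_of_ne_nil (by simp : c :: v' ≠ [])]
      exact hlast

theorem no_infinite_tower_exp' (m : ℕ) :
    ¬ ∃ t : ℕ → List ℕ,
      InfSubTower ((expNFA m).accepts : Set (List ℕ)) (endsWithB m) t := by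
  induction m with
  | zero =>
    rintro ⟨t, h0, hs⟩
    have hK : ∀ w : List ℕ, w ∈ (expNFA 0).accepts → w = [] := by
      intro w hw
      obtain ⟨hle, hacc⟩ := (accepts_iff 0 w).mp hw
      cases hacc with
      | nil => rfl
      | cons u j v hj _ _ _ => exact absurd (hle j (by simp)) (by omega)
    have hLne : ∀ w : List ℕ, w ∈ endsWithB 0 → w ≠ [] := by
      rintro w ⟨-, v, rfl⟩
      simp
    rcases h0 with h0 | h0
    · have h1 : t 1 ∈ endsWithB 0 := (hs 0).2.1 h0
      have h2 : t 2 ∈ (expNFA 0).accepts := (hs 1).2.2 h1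
      have hsub := (hs 1).1
      rw [hK _ h2] at hsub
      exact hLne _ h1 (List.sublist_nil.mp hsub)
    · have h1 : t 1 ∈ (expNFA 0).accepts := (hs 0).2.2 h0
      have hsub := (hs 0).1
      rw [hK _ h1] at hsub
      exact hLne _ h0 (List.sublist_nil.mp hsub)
  | succ m ih =>
    rintro ⟨t, h0, hs⟩
    have hmem : ∀ i, t i ∈ (expNFA (m + 1)).accepts ∨ t i ∈ endsWithB (m + 1) := by
      intro i
      induction i with
      | zero => exact h0
      | succ i ihi =>
        rcases ihi with h | h
        · exact Or.inr ((hs i).2.1 h)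
        · exact Or.inl ((hs i).2.2 h)
    have hchain : ∀ i j, i ≤ j → (t i).Sublist (t j) := by
      intro i j hij
      induction j, hij using Nat.le_induction with
      | base => exact List.Sublist.refl _
      | succ j hij ihj => exact ihj.trans (hs j).1
    by_cases hA : ∃ N, (m + 1) ∈ t N
    · obtain ⟨N, hN⟩ := hA
      have hmemN : ∀ i, (m + 1) ∈ t (N + i) := fun i =>
        (hchain N (N + i) (by omega)).subset hN
      set s : ℕ → List ℕ := fun i => cut (m + 1) (t (N + i)) with hsdef
      have hKK : ∀ i, t (N + i) ∈ (expNFA (m + 1)).accepts → s i ∈ (expNFA m).accepts := by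
        intro i h
        obtain ⟨u, -, -, -, hacc⟩ := K_cut m _ h (hmemN i)
        exact hacc
      have hcount : ∀ i, t (N + i) ∈ endsWithB (m + 1) → (m + 1) ∉ s i := by
        intro i h
        have hK1 : t (N + (i + 1)) ∈ (expNFA (m + 1)).accepts := (hs (N + i)).2.2 h
        obtain ⟨u', hw', hu', hv', -⟩ := K_cut m _ hK1 (hmemN (i + 1))
        have hc1 : List.count (m + 1) (t (N + (i + 1))) = 1 := by
          rw [hw']
          rw [List.count_append, List.count_cons]
          rw [List.count_eq_zero_of_not_mem hu', List.count_eq_zero_of_not_mem hv']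
          simp
        obtain ⟨u, hw, hu⟩ := cut_decomp (m + 1) (t (N + i)) (hmemN i)
        have hle : List.count (m + 1) (t (N + i)) ≤ 1 := by
          have h2 := ((hs (N + i)).1).count_le (m + 1)
          have hc1' : List.count (m + 1) (t (N + i + 1)) = 1 := hc1
          omega
        rw [hw, List.count_append, List.count_cons, List.count_eq_zero_of_not_mem hu] at hle
        simp at hle
        rw [← List.count_eq_zero]
        show List.count (m + 1) (cut (m + 1) (t (N + i))) = 0
        omega
      have hLL : ∀ i, t (N + i) ∈ endsWithB (m + 1) → s i ∈ endsWithB m := by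
        intro i h
        exact L_cut m _ h (hmemN i) (hcount i h)
      have himp1 : ∀ i, s i ∈ (expNFA m).accepts → t (N + i) ∈ (expNFA (m + 1)).accepts := by
        intro i hsi
        rcases hmem (N + i) with h | h
        · exact h
        · exact absurd hsi (fun hc => disj m _ hc (hLL i h))
      have himp2 : ∀ i, s i ∈ endsWithB m → t (N + i) ∈ endsWithB (m + 1) := by
        intro i hsi
        rcases hmem (N + i) with h | h
        · exact absurd hsi (fun hc => disj m _ (hKK i h) hc)
        · exact h
      have hssub : ∀ i, (s i).Sublist (s (i + 1)) := by
        intro i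
        obtain ⟨u, hw, hu⟩ := cut_decomp (m + 1) (t (N + i)) (hmemN i)
        obtain ⟨u', hw', hu'⟩ := cut_decomp (m + 1) (t (N + (i + 1))) (hmemN (i + 1))
        have hsub : (t (N + i)).Sublist (t (N + (i + 1))) := (hs (N + i)).1
        rw [hw, hw'] at hsub
        exact cut_sublist hu' hsub
      apply ih
      refine ⟨s, ?_, fun i => ⟨hssub i, fun hK => ?_, fun hL => ?_⟩⟩
      · rcases hmem N with h | h
        · exact Or.inl (hKK 0 h)
        · exact Or.inr (hLL 0 h)
      · exact hLL (i + 1) ((hs (N + i)).2.1 (himp1 i hK))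
      · exact hKK (i + 1) ((hs (N + i)).2.2 (himp2 i hL))
    · push_neg at hA
      apply ih
      refine ⟨t, ?_, fun i => ⟨(hs i).1, fun hK => ?_, fun hL => ?_⟩⟩
      · rcases h0 with h | h
        · exact Or.inl (K_down m _ h (hA 0))
        · exact Or.inr (L_down m _ h (hA 0))
      · exact L_down m _ ((hs i).2.1 (K_up m _ hK)) (hA (i + 1))
      · exact K_down m _ ((hs i).2.2 (L_up m _ hL)) (hA (i + 1))

end NoTowerAux

theorem no_infinite_tower_exp (m : ℕ) :
    ¬ ∃ t : ℕ → List ℕ,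
      InfSubTower ((expNFA m).accepts : Set (List ℕ)) (endsWithB m) t :=
  NoTowerAux.no_infinite_tower_exp' m
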